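/- Let R be a commutative ring and let t, π₀ ∈ R be nilpotent elements. Let A := R[T]/(T² − t·T + π₀), let π be the class of T, let σ : A → A be the R-algebra involution determined by σ(π) = t − π, and let N : A → R be the norm N(a) = a·σ(a). Let M be an A-module and q : M → R an R-valued hermitian quadratic form on M, i.e., a quadratic form over R such that q(a·x) = N(a)·q(x) and, for the polar form f(x,y) := q(x+y) − q(x) − q(y), one has f(a·x, y) = f(x, σ(a)·y), for all a ∈ A and x, y ∈ M. Suppose there exist v, w ∈ M with f(v, π·w) = 1 in R. Then there exist v′, w′ in the A-submodule of M generated by {v, w} such that q(v′) = q(w′) = f(v′, w′) = 0 and f(v′, π·w′) = 1. -/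

import Mathlib

open Polynomial

/-- The quadratic `R`-algebra `A = R[T]/(T² − t·T + π₀)`. -/
noncomputable abbrev QuadAlg (R : Type*) [CommRing R] (t π₀ : R) : Type _ :=
  AdjoinRoot (X ^ 2 - C t * X + C π₀ : Polynomial R)

/-- The class `π` of `T` in `R[T]/(T² − t·T + π₀)`. -/
noncomputable abbrev QuadAlg.pi (R : Type*) [CommRing R] (t π₀ : R) : QuadAlg R t π₀ :=
  AdjoinRoot.root _

/-- `q : M → R` is an `R`-valued hermitian quadratic form on the `A`-module `M`
(`A` a quadratic `R`-algebra with involution `σ` and norm `Nm`): it is a quadratic form over `R`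
(so `q (r • x) = r² q x` and its polar form `f (x, y) = q (x+y) − q x − q y` is `R`-bilinear),
`q (a • x) = Nm a · q x`, and `f (a • x, y) = f (x, σ a • y)`. -/
structure IsHermitianQuadForm (R : Type*) [CommRing R]
    (A : Type*) [CommRing A] [Algebra R A] (σ : A →ₐ[R] A) (Nm : A → R)
    (M : Type*) [AddCommGroup M] [Module R M] [Module A M] [IsScalarTower R A M]
    (q : M → R) : Prop where
  smul_sq : ∀ (r : R) (x : M), q (r • x) = r ^ 2 * q x
  polar_add_left : ∀ x x' y : M,
    q (x + x' + y) - q (x + x') - q y =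
      (q (x + y) - q x - q y) + (q (x' + y) - q x' - q y)
  polar_smul_left : ∀ (r : R) (x y : M),
    q (r • x + y) - q (r • x) - q y = r * (q (x + y) - q x - q y)
  norm_smul : ∀ (a : A) (x : M), q (a • x) = Nm a * q x
  herm : ∀ (a : A) (x y : M),
    q (a • x + y) - q (a • x) - q y = q (x + σ a • y) - q x - q (σ a • y)

theorem exists_fixed16 {R : Type*} [CommRing R] {m : R} (hm : IsNilpotent m) (c : R) :
    ∃ y : R, y = c + m * y ^ 2 := by
  obtain ⟨n, hn⟩ := hm
  set Y : ℕ → R := fun k => Nat.rec c (fun _ yk => c + m * yk ^ 2) k with hY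
  have hstep : ∀ k, Y (k + 1) = c + m * (Y k) ^ 2 := fun k => rfl
  have hdvd : ∀ k, m ^ (k + 1) ∣ Y (k + 1) - Y k := by
    intro k
    induction k with
    | zero =>
      refine ⟨c ^ 2, ?_⟩
      rw [hstep]
      have h0 : Y 0 = c := rfl
      rw [h0]; ring
    | succ k ih =>
      obtain ⟨u, hu⟩ := ih
      refine ⟨(Y (k + 1) + Y k) * u, ?_⟩
      rw [hstep (k+1), hstep k, pow_succ]
      have h1 : Y (k+1) - Y k = m ^ (k+1) * u := hu
      linear_combination (m * (Y (k+1) + Y k)) * h1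
  obtain ⟨u, hu⟩ := hdvd n
  have h0 : Y (n + 1) - Y n = 0 := by
    rw [hu, pow_succ, hn, zero_mul, zero_mul]
  refine ⟨Y n, ?_⟩
  have h1 := hstep n
  linear_combination h1 - h0


/-- **hyperbolic normal form lemma.**  Let `R` be a commutative ring and
`t, π₀ ∈ R` nilpotent.  Let `A := R[T]/(T² − t·T + π₀)` with `π` the class of `T`, `σ` the
`R`-algebra involution determined by `σ π = t − π`, and `N a = a·σ a` the norm (the unique
`Nm : A → R` with `algebraMap R A (Nm a) = a * σ a`).  Let `M` be an `A`-module and `q : M → R`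
an `R`-valued hermitian quadratic form on `M`.  If there are `v, w ∈ M` with
`f (v, π • w) = 1` (where `f` is the polar form of `q`), then there exist `v', w'` in the
`A`-submodule generated by `{v, w}` with `q v' = q w' = f (v', w') = 0` and
`f (v', π • w') = 1`. -/
theorem stmt_16 (R : Type*) [CommRing R] (t π₀ : R)
    (ht : IsNilpotent t) (hπ₀ : IsNilpotent π₀)
    (σ : QuadAlg R t π₀ →ₐ[R] QuadAlg R t π₀)
    (hσ : σ (QuadAlg.pi R t π₀) = algebraMap R (QuadAlg R t π₀) t - QuadAlg.pi R t π₀)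
    (Nm : QuadAlg R t π₀ → R)
    (hNm : ∀ a : QuadAlg R t π₀, algebraMap R (QuadAlg R t π₀) (Nm a) = a * σ a)
    (M : Type*) [AddCommGroup M] [Module R M] [Module (QuadAlg R t π₀) M]
    [IsScalarTower R (QuadAlg R t π₀) M]
    (q : M → R)
    (hq : IsHermitianQuadForm R (QuadAlg R t π₀) σ Nm M q)
    (v w : M)
    (hvw : q (v + QuadAlg.pi R t π₀ • w) - q v - q (QuadAlg.pi R t π₀ • w) = 1) :
    ∃ v' w' : M,
      v' ∈ Submodule.span (QuadAlg R t π₀) ({v, w} : Set M) ∧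
      w' ∈ Submodule.span (QuadAlg R t π₀) ({v, w} : Set M) ∧
      q v' = 0 ∧ q w' = 0 ∧
      q (v' + w') - q v' - q w' = 0 ∧
      q (v' + QuadAlg.pi R t π₀ • w') - q v' - q (QuadAlg.pi R t π₀ • w') = 1 := by
  classical
  have hmonic : (X ^ 2 - C t * X + C π₀ : R[X]).Monic := by monicity!
  set p := QuadAlg.pi R t π₀ with hp
  -- the basic relation π² = t·π − π₀
  have hrel : p ^ 2 - algebraMap R (QuadAlg R t π₀) t * p + algebraMap R (QuadAlg R t π₀) π₀ = 0 := by
    have h := AdjoinRoot.mk_self (f := (X ^ 2 - C t * X + C π₀ : R[X]))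
    simpa [map_add, map_sub, map_mul, map_pow, AdjoinRoot.mk_X, AdjoinRoot.mk_C,
      AdjoinRoot.algebraMap_eq] using h
  -- algebraMap is injective
  have hinj : Function.Injective (algebraMap R (QuadAlg R t π₀)) := by
    rcases subsingleton_or_nontrivial R with hR | hR
    · exact fun a b _ => Subsingleton.elim a b
    have hdeg : (X ^ 2 - C t * X + C π₀ : R[X]).natDegree = 2 := by compute_degree!
    intro r r' h
    set pb := AdjoinRoot.powerBasis' hmonic with hpb
    have hdim : pb.dim = 2 := hdeg
    let i0 : Fin pb.dim := ⟨0, by rw [hdim]; omega⟩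
    have hb : pb.basis i0 = 1 := by
      rw [PowerBasis.coe_basis]
      show pb.gen ^ (0 : ℕ) = 1
      rw [pow_zero]
    have h1 : r • pb.basis i0 = r' • pb.basis i0 := by
      rw [hb, ← Algebra.algebraMap_eq_smul_one, ← Algebra.algebraMap_eq_smul_one]
      exact h
    have h2 := congrArg pb.basis.repr h1
    rw [map_smul, map_smul, Module.Basis.repr_self] at h2
    have h3 := congrArg (fun g => g i0) h2
    simpa using h3
  -- module facts
  have hpp : ∀ x : M, p • p • x = t • (p • x) - π₀ • x := by
    intro x
    have h2 : p * p = algebraMap R (QuadAlg R t π₀) t * p - algebraMap R (QuadAlg R t π₀) π₀ := by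
      linear_combination hrel
    rw [← mul_smul, h2, sub_smul, mul_smul, algebraMap_smul, algebraMap_smul]
  have hcomm : ∀ (r : R) (x : M), p • r • x = r • p • x := by
    intro r x
    rw [← algebraMap_smul (QuadAlg R t π₀) r x, ← mul_smul, ← algebraMap_smul (QuadAlg R t π₀) r (p • x), ← mul_smul,
      mul_comm p (algebraMap R (QuadAlg R t π₀) r)]
  -- the polar form
  set f : M → M → R := fun x y => q (x + y) - q x - q y with hf
  have hq0 : q (0 : M) = 0 := by
    have h := hq.smul_sq 0 0
    simpa using h
  have fsymm : ∀ x y, f x y = f y x := by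
    intro x y; simp only [hf]; rw [add_comm]; ring
  have faddl : ∀ x x' y, f (x + x') y = f x y + f x' y := hq.polar_add_left
  have fsmull : ∀ (r : R) (x y : M), f (r • x) y = r * f x y := hq.polar_smul_left
  have faddr : ∀ x y y', f x (y + y') = f x y + f x y' := by
    intro x y y'
    rw [fsymm, faddl, fsymm y x, fsymm y' x]
  have fsmulr : ∀ (r : R) (x y : M), f x (r • y) = r * f x y := by
    intro r x y
    rw [fsymm, fsmull, fsymm]
  have fsubr : ∀ x u u', f x (u - u') = f x u - f x u' := by
    intro x u u'
    have h := faddr x u ((-1 : R) • u')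
    rw [neg_one_smul] at h
    have h2 := fsmulr (-1 : R) x u'
    rw [neg_one_smul] at h2
    rw [sub_eq_add_neg, h, h2]; ring
  have qadd : ∀ x y, q (x + y) = q x + q y + f x y := by
    intro x y; simp only [hf]; ring
  have qsm : ∀ (r : R) (x : M), q (r • x) = r ^ 2 * q x := hq.smul_sq
  have fself : ∀ x, f x x = 2 * q x := by
    intro x
    have h2 : x + x = (2 : R) • x := (two_smul R x).symm
    simp only [hf]
    rw [h2, qsm]; ring
  -- sesquilinearity with respect to π
  have fpl : ∀ x y, f (p • x) y = t * f x y - f x (p • y) := by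
    intro x y
    have h2 : (algebraMap R (QuadAlg R t π₀) t - p) • y = t • y - p • y := by
      rw [sub_smul, algebraMap_smul]
    calc f (p • x) y = f x ((algebraMap R (QuadAlg R t π₀) t - p) • y) := by
          rw [← hσ]; exact hq.herm p x y
      _ = f x (t • y - p • y) := by rw [h2]
      _ = t * f x y - f x (p • y) := by rw [fsubr, fsmulr]
  have fpp : ∀ x y, f (p • x) (p • y) = π₀ * f x y := by
    intro x y
    rw [fpl, hpp y, fsubr, fsmulr, fsmulr]
    ring
  -- norm of p and q (p • x)
  have hNmp : Nm p = π₀ := by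
    apply hinj
    rw [hNm, hσ]
    linear_combination -hrel
  have qp : ∀ x : M, q (p • x) = π₀ * q x := by
    intro x
    rw [hq.norm_smul, hNmp]
  -- nilpotency helpers
  have nilt : ∀ r : R, IsNilpotent (t * r) := fun r => (Commute.all t r).isNilpotent_mul_right ht
  have nilp : ∀ r : R, IsNilpotent (π₀ * r) := fun r => (Commute.all π₀ r).isNilpotent_mul_right hπ₀
  -- Step 1 : make q v' = 0
  have hfv : f v (p • w) = 1 := hvw
  obtain ⟨y, hy⟩ := exists_fixed16 (m := -(π₀ * q w)) ((nilp (q w)).neg) (-(q v))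
  set v' := v + y • (p • w) with hv'
  have hqv' : q v' = 0 := by
    rw [hv', qadd, qsm, qp, fsmulr, hfv]
    linear_combination hy
  -- values of the pairing with v'
  set A' := f v' w with hA'
  set G' := f v' (p • w) with hG'def
  have hG' : G' = 1 + y * (π₀ * f w w) := by
    rw [hG'def, hv', faddl, fsmull, fpp, hfv]
  -- Step 2 : make q w' = 0
  have hu1 : IsUnit (G' - t * A') := by
    have hn : IsNilpotent (t * A' - y * (π₀ * f w w)) := by
      have h1 : t * A' - y * (π₀ * f w w) = t * A' + -(π₀ * (y * f w w)) := by ring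
      rw [h1]
      exact (Commute.all _ _).isNilpotent_add (nilt _) (nilp _).neg
    have h3 : G' - t * A' = 1 - (t * A' - y * (π₀ * f w w)) := by
      rw [hG']; ring
    rw [h3]
    exact hn.isUnit_one_sub
  obtain ⟨z, hz⟩ : ∃ z : R, z * (G' - t * A') = q w := by
    obtain ⟨u, hu⟩ := hu1
    exact ⟨q w * ↑u⁻¹, by rw [← hu, mul_assoc, Units.inv_mul, mul_one]⟩
  set w' := w + z • (p • v') with hw'
  have hqw' : q w' = 0 := by
    rw [hw', qadd, qsm, qp, hqv', fsmulr]
    have h1 : f w (p • v') = t * A' - G' := by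
      rw [fsymm, fpl, ← hA', ← hG'def]
    rw [h1]
    linear_combination -hz
  -- the pairing values for (v', w')
  set E' := f v' (p • v') with hE'
  have hfv'v' : f v' v' = 0 := by rw [fself, hqv']; ring
  set Pc := f v' w' with hPc
  have hPval : Pc = A' + z * E' := by
    rw [hPc, hw', faddr, fsmulr, ← hA', ← hE']
  set Qc := f v' (p • w') with hQc
  have hQval : Qc = G' + z * (t * E') := by
    have h1 : p • w' = p • w + z • (p • p • v') := by
      rw [hw', smul_add, hcomm]
    rw [hQc, h1, faddr, fsmulr, hpp, fsubr, fsmulr, fsmulr, ← hG'def, ← hE', hfv'v']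
    ring
  -- Qc is a unit
  have hQunit : IsUnit Qc := by
    have hn : IsNilpotent (-(y * (π₀ * f w w)) - z * (t * E')) := by
      have h1 : IsNilpotent (-(y * (π₀ * f w w))) := by
        have h2 : y * (π₀ * f w w) = π₀ * (y * f w w) := by ring
        rw [h2]; exact (nilp _).neg
      have h3 : IsNilpotent (-(z * (t * E'))) := by
        have h4 : z * (t * E') = t * (z * E') := by ring
        rw [h4]; exact (nilt _).neg
      simpa [sub_eq_add_neg] using (Commute.all _ _).isNilpotent_add h1 h3
    have h5 : Qc = 1 - (-(y * (π₀ * f w w)) - z * (t * E')) := by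
      rw [hQval, hG']; ring
    rw [h5]
    exact hn.isUnit_one_sub
  -- the determinant D
  set D := t * Pc * Qc - π₀ * Pc ^ 2 - Qc ^ 2 with hD
  have hDunit : IsUnit D := by
    obtain ⟨u, hu⟩ := hQunit
    have hQ2 : Qc ^ 2 * ↑(u ^ 2)⁻¹ = 1 := by
      rw [← hu, ← Units.val_pow_eq_pow_val, Units.mul_inv]
    have hn : IsNilpotent ((t * Pc * Qc - π₀ * Pc ^ 2) * ↑(u ^ 2)⁻¹) := by
      have h1 : (t * Pc * Qc - π₀ * Pc ^ 2) * ↑(u ^ 2)⁻¹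
          = t * (Pc * Qc * ↑(u ^ 2)⁻¹) + -(π₀ * (Pc ^ 2 * ↑(u ^ 2)⁻¹)) := by ring
      rw [h1]
      exact (Commute.all _ _).isNilpotent_add (nilt _) (nilp _).neg
    have h6 : D = -(Qc ^ 2 * (1 - (t * Pc * Qc - π₀ * Pc ^ 2) * ↑(u ^ 2)⁻¹)) := by
      rw [hD]
      linear_combination (π₀ * Pc ^ 2 - t * Pc * Qc) * hQ2
    rw [h6]
    exact IsUnit.neg (IsUnit.mul ⟨u ^ 2, by rw [Units.val_pow_eq_pow_val, hu]⟩
      hn.isUnit_one_sub)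
  obtain ⟨e, he⟩ : ∃ e : R, D * e = 1 := by
    obtain ⟨u, hu⟩ := hDunit
    exact ⟨↑u⁻¹, by rw [← hu, Units.mul_inv]⟩
  -- Step 3 : normalize
  set c := -Qc * e with hc
  set d := Pc * e with hd
  set aA : QuadAlg R t π₀ := algebraMap R (QuadAlg R t π₀) c + algebraMap R (QuadAlg R t π₀) d * p with haA
  set w'' := aA • w' with hw''
  have hexp : w'' = c • w' + d • (p • w') := by
    rw [hw'', haA, add_smul, mul_smul, algebraMap_smul, algebraMap_smul]
  have hqw'' : q w'' = 0 := by
    rw [hw'', hq.norm_smul, hqw', mul_zero]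
  have hfw1 : f v' w'' = 0 := by
    rw [hexp, faddr, fsmulr, fsmulr, ← hPc, ← hQc, hc, hd]
    ring
  have hfw2 : f v' (p • w'') = 1 := by
    have h1 : p • w'' = c • (p • w') + d • (p • p • w') := by
      rw [hexp, smul_add, hcomm, hcomm]
    rw [h1, faddr, fsmulr, fsmulr, hpp, fsubr, fsmulr, fsmulr, ← hQc, ← hPc, hc, hd]
    linear_combination he
  -- membership in the span
  have hvmem : v ∈ Submodule.span (QuadAlg R t π₀) ({v, w} : Set M) :=
    Submodule.subset_span (by simp)
  have hwmem : w ∈ Submodule.span (QuadAlg R t π₀) ({v, w} : Set M) :=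
    Submodule.subset_span (by simp)
  have hsm : ∀ (r : R) (x : M), r • (p • x) = (algebraMap R (QuadAlg R t π₀) r * p) • x := by
    intro r x
    rw [mul_smul, algebraMap_smul]
  have hv'mem : v' ∈ Submodule.span (QuadAlg R t π₀) ({v, w} : Set M) := by
    rw [hv', hsm]
    exact Submodule.add_mem _ hvmem (Submodule.smul_mem _ _ hwmem)
  have hw'mem : w' ∈ Submodule.span (QuadAlg R t π₀) ({v, w} : Set M) := by
    rw [hw', hsm]
    exact Submodule.add_mem _ hwmem (Submodule.smul_mem _ _ hv'mem)
  have hw''mem : w'' ∈ Submodule.span (QuadAlg R t π₀) ({v, w} : Set M) := by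
    rw [hw'']
    exact Submodule.smul_mem _ _ hw'mem
  refine ⟨v', w'', hv'mem, hw''mem, hqv', hqw'', ?_, ?_⟩
  · exact hfw1
  · exact hfw2
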